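/- Let {s_1,...,s_K} be an (M,K,L)-schedule sequence set with respect to a partition of the K nodes into W nonempty groups whose smallest group size is k = 1. Then L ≥ 4(W−1). -/

import Mathlib

/-- A schedule symbol for a system with `W` channels: `T m` means "transmit on
channel `m`" and `R r` means "receive on channel `r`". -/
inductive SchedSym (W : ℕ) where
  | T : Fin W → SchedSym W
  | R : Fin W → SchedSym W
deriving DecidableEq

/-- `IsScheduleSet W K L G s` says that `s` is an `(M,K,L)`-schedule sequence set
(for any number of channels `M ≥ W`) with respect to the partition of the `K` nodes
into the `W` groups given by the group-assignment map `G` (node `i` lies in group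
`G i`). Sequences are modeled as `ℕ → SchedSym W`, indexed modulo `L`.

* `own_channel`: a node in group `m` only uses the transmit symbol `T m`;
* `intra`: intra-group requirement (eq. (1) of the paper) for all offsets `τ ∈ Z_L^K`;
* `inter`: inter-group requirement (eq. (2) of the paper) for all offsets `τ ∈ Z_L^K`. -/
structure IsScheduleSet (W K L : ℕ) (G : Fin K → Fin W)
    (s : Fin K → ℕ → SchedSym W) : Prop where
  own_channel : ∀ (i : Fin K) (t : ℕ) (m : Fin W), s i t = SchedSym.T m → m = G i
  intra : ∀ τ : Fin K → ℕ, (∀ i, τ i < L) → ∀ i j : Fin K, i ≠ j → G i = G j →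
    ∃ t < L, s i ((t + τ i) % L) = SchedSym.T (G i) ∧
      s j ((t + τ j) % L) = SchedSym.R (G i) ∧
      ∀ x : Fin K, x ≠ i → x ≠ j → G x = G i → s x ((t + τ x) % L) ≠ SchedSym.T (G i)
  inter : ∀ τ : Fin K → ℕ, (∀ i, τ i < L) → ∀ i j : Fin K, G i ≠ G j →
    ∃ t < L, s i ((t + τ i) % L) = SchedSym.T (G i) ∧
      s j ((t + τ j) % L) = SchedSym.R (G i) ∧
      ∀ x : Fin K, x ≠ i → G x = G i → s x ((t + τ x) % L) ≠ SchedSym.T (G i)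

/-- The size of group `m` under the group-assignment map `G`. -/
def groupSize {W K : ℕ} (G : Fin K → Fin W) (m : Fin W) : ℕ :=
  (Finset.univ.filter (fun i => G i = m)).card

/-- if `{s_1,...,s_K}` is an `(M,K,L)`-schedule sequence set with
respect to a partition into `W` nonempty groups with smallest group size `k = 1`, then
`L ≥ 4(W−1)`. -/
theorem schedule_set_period_lower_bound_k_one
    (M K L W : ℕ) (hL : 0 < L) (hW : 1 ≤ W) (hWM : W ≤ M) (hMK : M ≤ K)
    (G : Fin K → Fin W) (hG : Function.Surjective G)
    (hkex : ∃ m : Fin W, groupSize G m = 1)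
    (s : Fin K → ℕ → SchedSym W) (hs : IsScheduleSet W K L G s) :
    4 * (W - 1) ≤ L := by
  classical
  by_contra hcon
  push_neg at hcon
  set x := W - 1 with hxdef
  have hx1 : 1 ≤ x := by omega
  have hW2 : 2 ≤ W := by omega
  choose j hj using hG
  set TS : Fin W → Finset ℕ :=
    fun m => (Finset.range L).filter (fun t => s (j m) t = SchedSym.T m) with hTS
  set RS : Fin W → Fin W → Finset ℕ :=
    fun m n => (Finset.range L).filter (fun t => s (j m) t = SchedSym.R n) with hRS
  -- product bound
  have hprod : ∀ m n : Fin W, m ≠ n → L ≤ (TS n).card * (RS m n).card := by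
    intro m n hmn
    have hGne : G (j n) ≠ G (j m) := by
      rw [hj, hj]; exact fun h => hmn h.symm
    have hjne : j n ≠ j m := fun h => hGne (by rw [h])
    have hex : ∀ σ : ℕ, ∃ t, σ < L → t ∈ TS n ∧ (t + σ) % L ∈ RS m n := by
      intro σ
      by_cases hσ : σ < L
      · obtain ⟨t, htL, h1, h2, -⟩ :=
          hs.inter (fun y => if y = j m then σ else 0)
            (fun i => by split <;> [exact hσ; exact hL]) (j n) (j m) hGne
        refine ⟨t, fun _ => ⟨?_, ?_⟩⟩
        · simp only [if_neg hjne, Nat.add_zero, Nat.mod_eq_of_lt htL, hj] at h1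
          simp only [hTS, Finset.mem_filter, Finset.mem_range]
          exact ⟨htL, h1⟩
        · simp only [if_pos rfl, hj] at h2
          simp only [hRS, Finset.mem_filter, Finset.mem_range]
          exact ⟨Nat.mod_lt _ hL, h2⟩
      · exact ⟨0, fun h => absurd h hσ⟩
    choose f hf using hex
    have hmaps : ∀ σ ∈ Finset.range L, (f σ, (f σ + σ) % L) ∈ TS n ×ˢ RS m n := by
      intro σ hσ
      rw [Finset.mem_range] at hσ
      obtain ⟨h1, h2⟩ := hf σ hσ
      exact Finset.mem_product.mpr ⟨h1, h2⟩
    have hinj : Set.InjOn (fun σ => (f σ, (f σ + σ) % L)) (Finset.range L) := by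
      intro σ1 hσ1 σ2 hσ2 h
      simp only [Finset.coe_range, Set.mem_Iio] at hσ1 hσ2
      have h1 : f σ1 = f σ2 := (Prod.mk.injEq _ _ _ _ ▸ h).1
      have h2 : (f σ1 + σ1) % L = (f σ2 + σ2) % L := (Prod.mk.injEq _ _ _ _ ▸ h).2
      rw [h1] at h2
      have h3 : σ1 ≡ σ2 [MOD L] := Nat.ModEq.add_left_cancel' (f σ2) h2
      rwa [Nat.ModEq, Nat.mod_eq_of_lt hσ1, Nat.mod_eq_of_lt hσ2] at h3
    calc L = (Finset.range L).card := (Finset.card_range L).symm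
      _ ≤ (TS n ×ˢ RS m n).card := Finset.card_le_card_of_injOn _ hmaps hinj
      _ = (TS n).card * (RS m n).card := Finset.card_product _ _
  -- budget bound
  have hbudget : ∀ m : Fin W,
      (TS m).card + ∑ n ∈ Finset.univ.erase m, (RS m n).card ≤ L := by
    intro m
    set F : Fin W → Finset ℕ := fun n => if n = m then TS m else RS m n with hF
    have hdisj : ∀ n1 ∈ (Finset.univ : Finset (Fin W)), ∀ n2 ∈ Finset.univ,
        n1 ≠ n2 → Disjoint (F n1) (F n2) := by
      intro n1 _ n2 _ hne
      rw [Finset.disjoint_left]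
      intro a ha1 ha2
      simp only [hF] at ha1 ha2
      split_ifs at ha1 ha2 with h1 h2 h2 <;>
        simp only [hTS, hRS, Finset.mem_filter] at ha1 ha2
      · exact hne (h1.trans h2.symm)
      · cases ha1.2.symm.trans ha2.2
      · cases ha1.2.symm.trans ha2.2
      · have := ha1.2.symm.trans ha2.2
        simp only [SchedSym.R.injEq] at this
        exact hne this
    have hcard : ∑ n ∈ Finset.univ, (F n).card = (Finset.univ.biUnion F).card :=
      (Finset.card_biUnion hdisj).symm
    have hsub : Finset.univ.biUnion F ⊆ Finset.range L := by
      intro a ha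
      rw [Finset.mem_biUnion] at ha
      obtain ⟨n, -, ha⟩ := ha
      simp only [hF] at ha
      split_ifs at ha <;> simp only [hTS, hRS, Finset.mem_filter] at ha <;> 
        exact Finset.mem_range.mpr (Finset.mem_range.mp ha.1)
    have hle : ∑ n ∈ Finset.univ, (F n).card ≤ L := by
      rw [hcard]
      calc (Finset.univ.biUnion F).card ≤ (Finset.range L).card :=
            Finset.card_le_card hsub
        _ = L := Finset.card_range L
    have hsplit : (F m).card + ∑ n ∈ Finset.univ.erase m, (F n).card
        = ∑ n ∈ Finset.univ, (F n).card := by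
      rw [add_comm]
      exact Finset.sum_erase_add Finset.univ (fun n => (F n).card) (Finset.mem_univ m)
    have hFm : F m = TS m := by simp [hF]
    have hFn : ∀ n ∈ Finset.univ.erase m, (F n).card = (RS m n).card := by
      intro n hn
      have : n ≠ m := (Finset.mem_erase.mp hn).1
      simp [hF, this]
    calc (TS m).card + ∑ n ∈ Finset.univ.erase m, (RS m n).card
        = (F m).card + ∑ n ∈ Finset.univ.erase m, (F n).card := by
          rw [hFm, Finset.sum_congr rfl hFn]
      _ = ∑ n ∈ Finset.univ, (F n).card := hsplit
      _ ≤ L := hle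
  -- basic facts
  have htle : ∀ m, (TS m).card ≤ L := by
    intro m
    calc (TS m).card ≤ (Finset.range L).card :=
          Finset.card_le_card (Finset.filter_subset _ _)
      _ = L := Finset.card_range L
  have htpos : ∀ m, 1 ≤ (TS m).card := by
    intro m
    have : Nontrivial (Fin W) := Fin.nontrivial_iff_two_le.mpr hW2
    obtain ⟨n, hn⟩ := exists_ne m
    have hp := hprod n m hn
    rcases Nat.eq_zero_or_pos (TS m).card with h | h
    · rw [h, Nat.zero_mul] at hp; omega
    · exact h
  -- key per-pair inequality
  have hkey : ∀ m n : Fin W, m ≠ n →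
      (L - (TS n).card) + 1 ≤ x * (RS m n).card := by
    intro m n hmn
    have hp := hprod m n hmn
    obtain ⟨b, hb⟩ : ∃ b, (TS n).card + b = L := ⟨L - (TS n).card, by have := htle n; omega⟩
    have h4 : 4 * ((TS n).card * b) ≤ L * L := by
      have hbz : ((TS n).card : ℤ) + b = L := by exact_mod_cast hb
      have hz : (4:ℤ) * (((TS n).card : ℤ) * b) ≤ (L:ℤ) * L := by
        nlinarith [sq_nonneg (((TS n).card : ℤ) - b)]
      exact_mod_cast hz
    have hLL : L * L < 4 * (x * L) := by
      have h := mul_lt_mul_of_pos_right hcon hL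
      calc L * L < (4 * x) * L := h
        _ = 4 * (x * L) := by ring
    have h5 : (TS n).card * b < (TS n).card * (x * (RS m n).card) := by
      have h6 : 4 * ((TS n).card * b) < 4 * ((TS n).card * (x * (RS m n).card)) := by
        calc 4 * ((TS n).card * b) ≤ L * L := h4
          _ < 4 * (x * L) := hLL
          _ ≤ 4 * (x * ((TS n).card * (RS m n).card)) := by
              have h := Nat.mul_le_mul_left (4 * x) hp
              calc 4 * (x * L) = (4 * x) * L := by ring
                _ ≤ (4 * x) * ((TS n).card * (RS m n).card) := h
                _ = 4 * (x * ((TS n).card * (RS m n).card)) := by ring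
          _ = 4 * ((TS n).card * (x * (RS m n).card)) := by ring
      omega
    have h7 : b < x * (RS m n).card := Nat.lt_of_mul_lt_mul_left h5
    omega
  -- main per-node inequality
  set u : Fin W → ℕ := fun m => L - (TS m).card with hu
  set S : ℕ := ∑ m ∈ Finset.univ, u m with hS
  have hcarderase : ∀ m : Fin W, (Finset.univ.erase m).card = x := by
    intro m
    rw [Finset.card_erase_of_mem (Finset.mem_univ m), Finset.card_univ,
      Fintype.card_fin]
  have hmain : ∀ m : Fin W, S + x ≤ W * u m := by
    intro m
    have h1 : (∑ n ∈ Finset.univ.erase m, u n) + x ≤ x * u m := by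
      calc (∑ n ∈ Finset.univ.erase m, u n) + x
          = ∑ n ∈ Finset.univ.erase m, (u n + 1) := by
            rw [Finset.sum_add_distrib, Finset.sum_const, hcarderase m, smul_eq_mul,
              mul_one]
        _ ≤ ∑ n ∈ Finset.univ.erase m, x * (RS m n).card := by
            refine Finset.sum_le_sum fun n hn => ?_
            exact hkey m n (fun h => (Finset.mem_erase.mp hn).1 h.symm)
        _ = x * ∑ n ∈ Finset.univ.erase m, (RS m n).card := by
            rw [Finset.mul_sum]
        _ ≤ x * u m := by
            refine Nat.mul_le_mul_left x ?_
            have := hbudget m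
            have := htle m
            simp only [hu]
            omega
    have h2 : (∑ n ∈ Finset.univ.erase m, u n) + u m = S := by
      rw [hS]; exact Finset.sum_erase_add _ _ (Finset.mem_univ m)
    have hWx : W = x + 1 := by omega
    calc S + x = ((∑ n ∈ Finset.univ.erase m, u n) + x) + u m := by omega
      _ ≤ x * u m + u m := by omega
      _ = W * u m := by rw [hWx]; ring
  have hfinal : W * (S + x) ≤ W * S := by
    calc W * (S + x) = ∑ _m ∈ (Finset.univ : Finset (Fin W)), (S + x) := by
          rw [Finset.sum_const, Finset.card_univ, Fintype.card_fin, smul_eq_mul]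
      _ ≤ ∑ m ∈ Finset.univ, W * u m := Finset.sum_le_sum fun m _ => hmain m
      _ = W * S := by rw [hS, Finset.mul_sum]
  have : W * x = 0 := by nlinarith
  have := Nat.mul_eq_zero.mp this
  omega
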